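/- (Reduction of ELU-subsumption to TSAT with ∃ only) Let T be a TBox over operators ⊤, ⊓, ⊔ and quantifier ∃, and A, B atomic concepts. Let R be a fresh role and B' a fresh atomic concept, and define T' = T ∪ {⊤ ⊑ ∃R.(A ⊓ B'), ⊤ ⊑ B ⊔ B', B ⊓ B' ⊑ ⊥}. Then T ⊨ A ⊑ B if and only if T' is unsatisfiable. -/

import Mathlib

namespace ALC

/-- A Boolean operator: an arity together with a Boolean function of that arity. -/
structure BoolOp where
  arity : ℕ
  fn : (Fin arity → Bool) → Bool

/-- ALC concepts over atomic concepts `A` and roles `R`, with arbitrary Boolean operators. -/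
inductive Concept (A R : Type) : Type
  | atom : A → Concept A R
  | op : (o : BoolOp) → (Fin o.arity → Concept A R) → Concept A R
  | ex : R → Concept A R → Concept A R
  | all : R → Concept A R → Concept A R

def topOp : BoolOp := ⟨0, fun _ => true⟩
def botOp : BoolOp := ⟨0, fun _ => false⟩
def negOp : BoolOp := ⟨1, fun v => !(v 0)⟩
def andOp : BoolOp := ⟨2, fun v => v 0 && v 1⟩
def orOp : BoolOp := ⟨2, fun v => v 0 || v 1⟩
def xorOp : BoolOp := ⟨2, fun v => xor (v 0) (v 1)⟩

namespace Concept
variable {A R : Type}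

def top : Concept A R := .op topOp Fin.elim0
def bot : Concept A R := .op botOp Fin.elim0
def neg (C : Concept A R) : Concept A R := .op negOp ![C]
def inf (C D : Concept A R) : Concept A R := .op andOp ![C, D]
def sup (C D : Concept A R) : Concept A R := .op orOp ![C, D]

/-- The atomic concept `a` occurs in the concept. -/
def atomOcc (a : A) : Concept A R → Prop
  | .atom b => b = a
  | .op _ cs => ∃ i, (cs i).atomOcc a
  | .ex _ c => c.atomOcc a
  | .all _ c => c.atomOcc a

/-- The role `r` occurs in the concept. -/
def roleOcc (r : R) : Concept A R → Prop
  | .atom _ => False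
  | .op _ cs => ∃ i, (cs i).roleOcc r
  | .ex s c => s = r ∨ c.roleOcc r
  | .all s c => s = r ∨ c.roleOcc r

/-- All Boolean operators of the concept belong to `B`. -/
def opsIn (B : Set BoolOp) : Concept A R → Prop
  | .atom _ => True
  | .op o cs => o ∈ B ∧ ∀ i, (cs i).opsIn B
  | .ex _ c => c.opsIn B
  | .all _ c => c.opsIn B

/-- No universal quantifier occurs. -/
def noAll : Concept A R → Prop
  | .atom _ => True
  | .op _ cs => ∀ i, (cs i).noAll
  | .ex _ c => c.noAll
  | .all _ _ => False

/-- No existential quantifier occurs. -/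
def noEx : Concept A R → Prop
  | .atom _ => True
  | .op _ cs => ∀ i, (cs i).noEx
  | .ex _ _ => False
  | .all _ c => c.noEx

end Concept

/-- An ALC interpretation. -/
structure Interp (A R Ind : Type) where
  Δ : Type
  nonempty : Nonempty Δ
  conc : A → Set Δ
  role : R → Δ → Δ → Prop
  ind : Ind → Δ

open Classical in
/-- The extension of a concept in an interpretation. -/
noncomputable def Interp.sem {A R Ind : Type} (I : Interp A R Ind) : Concept A R → Set I.Δ
  | .atom a => I.conc a
  | .op o cs => {x | o.fn (fun i => decide (x ∈ I.sem (cs i))) = true}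
  | .ex r c => {x | ∃ y, I.role r x y ∧ y ∈ I.sem c}
  | .all r c => {x | ∀ y, I.role r x y → y ∈ I.sem c}

/-- Satisfaction of a GCI `C ⊑ D`. -/
def Interp.satAx {A R Ind : Type} (I : Interp A R Ind) (ax : Concept A R × Concept A R) : Prop :=
  I.sem ax.1 ⊆ I.sem ax.2

/-- Satisfaction of a TBox. -/
def Interp.satT {A R Ind : Type} (I : Interp A R Ind) (T : Set (Concept A R × Concept A R)) : Prop :=
  ∀ ax ∈ T, I.satAx ax

/-- ABox assertions. -/
inductive Assertion (A R Ind : Type)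
  | conc : Concept A R → Ind → Assertion A R Ind
  | role : R → Ind → Ind → Assertion A R Ind

/-- Satisfaction of an ABox assertion. -/
noncomputable def Interp.satA {A R Ind : Type} (I : Interp A R Ind) : Assertion A R Ind → Prop
  | .conc C a => I.ind a ∈ I.sem C
  | .role r a b => I.role r (I.ind a) (I.ind b)

/-- Satisfaction of an ABox. -/
def Interp.satAB {A R Ind : Type} (I : Interp A R Ind) (Ab : Set (Assertion A R Ind)) : Prop :=
  ∀ x ∈ Ab, I.satA x


lemma sem_ext {A R Ind : Type} (Δ : Type) (ne : Nonempty Δ) (c1 c2 : A → Set Δ)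
    (ρ1 ρ2 : R → Δ → Δ → Prop) (ind1 ind2 : Ind → Δ) :
    ∀ C : Concept A R, (∀ x, C.atomOcc x → c1 x = c2 x) →
      (∀ s, C.roleOcc s → ρ1 s = ρ2 s) →
      (Interp.mk Δ ne c1 ρ1 ind1).sem C = (Interp.mk Δ ne c2 ρ2 ind2).sem C := by
  classical
  intro C
  induction C with
  | atom x => intro hc _; simp only [Interp.sem]; exact hc x rfl
  | op o cs ih =>
    intro hc hρ
    simp only [Interp.sem]
    have e : ∀ i, (Interp.mk Δ ne c1 ρ1 ind1).sem (cs i)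
        = (Interp.mk Δ ne c2 ρ2 ind2).sem (cs i) :=
      fun i => ih i (fun y hy => hc y ⟨i, hy⟩) (fun s hs => hρ s ⟨i, hs⟩)
    ext x
    simp only [Set.mem_setOf_eq]
    have hd : (fun i => decide (x ∈ (Interp.mk Δ ne c1 ρ1 ind1).sem (cs i)))
        = (fun i => decide (x ∈ (Interp.mk Δ ne c2 ρ2 ind2).sem (cs i))) := by
      funext i
      exact decide_eq_decide.mpr (by rw [e i])
    rw [hd]
  | ex s c ih =>
    intro hc hρ
    simp only [Interp.sem]
    rw [ih (fun y hy => hc y hy) (fun t ht => hρ t (Or.inr ht)), hρ s (Or.inl rfl)]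
  | all s c ih =>
    intro hc hρ
    simp only [Interp.sem]
    rw [ih (fun y hy => hc y hy) (fun t ht => hρ t (Or.inr ht)), hρ s (Or.inl rfl)]

lemma mem_sem_top {A R Ind : Type} (I : Interp A R Ind) (x : I.Δ) :
    x ∈ I.sem (Concept.top : Concept A R) := by
  simp [Concept.top, Interp.sem, topOp]

lemma not_mem_sem_bot {A R Ind : Type} (I : Interp A R Ind) (x : I.Δ) :
    x ∉ I.sem (Concept.bot : Concept A R) := by
  simp [Concept.bot, Interp.sem, botOp]

lemma mem_sem_inf {A R Ind : Type} (I : Interp A R Ind) (C D : Concept A R) (x : I.Δ) :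
    x ∈ I.sem (C.inf D) ↔ x ∈ I.sem C ∧ x ∈ I.sem D := by
  simp [Concept.inf, Interp.sem, andOp]
  classical
  exact ⟨fun h => ⟨of_decide_eq_true h.1, of_decide_eq_true h.2⟩, fun h => ⟨decide_eq_true h.1, decide_eq_true h.2⟩⟩

lemma mem_sem_ex {A R Ind : Type} (I : Interp A R Ind) (s : R) (C : Concept A R) (x : I.Δ) :
    x ∈ I.sem (Concept.ex s C) ↔ ∃ y, I.role s x y ∧ y ∈ I.sem C := Iff.rfl

lemma mem_sem_sup {A R Ind : Type} (I : Interp A R Ind) (C D : Concept A R) (x : I.Δ) :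
    x ∈ I.sem (C.sup D) ↔ x ∈ I.sem C ∨ x ∈ I.sem D := by
  simp [Concept.sup, Interp.sem, orOp]
  classical
  exact ⟨fun h => h.imp of_decide_eq_true of_decide_eq_true, fun h => h.imp decide_eq_true decide_eq_true⟩

/-- Reduction of ELU-subsumption to TBox satisfiability with ∃ only. -/
theorem stmt15 {A R Ind : Type} (T : Set (Concept A R × Concept A R)) (a b b' : A) (r rb : R)
    (hT : ∀ ax ∈ T, ax.1.opsIn {topOp, andOp, orOp} ∧ ax.1.noAll ∧
                    ax.2.opsIn {topOp, andOp, orOp} ∧ ax.2.noAll)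
    (hfresh : ∀ ax ∈ T,
      (¬ ax.1.atomOcc b' ∧ ¬ ax.2.atomOcc b') ∧
      (¬ ax.1.roleOcc r ∧ ¬ ax.2.roleOcc r) ∧
      (¬ ax.1.roleOcc rb ∧ ¬ ax.2.roleOcc rb))
    (hb'a : b' ≠ a) (hb'b : b' ≠ b) (hr : r ≠ rb) :
    (∀ I : Interp A R Ind, I.satT T → I.conc a ⊆ I.conc b) ↔
      ¬ ∃ I : Interp A R Ind, I.satT (T ∪
        {(Concept.top, Concept.ex r ((Concept.atom a).inf (Concept.atom b'))),
         (Concept.top, (Concept.atom b).sup (Concept.atom b')),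
         ((Concept.atom b).inf (Concept.atom b'), Concept.bot)}) := by
  classical
  constructor
  · rintro h ⟨I, hI⟩
    have hIT : I.satT T := fun ax hax => hI ax (Or.inl hax)
    have hsub := h I hIT
    obtain ⟨x⟩ := I.nonempty
    have hx1 := hI (Concept.top, Concept.ex r ((Concept.atom a).inf (Concept.atom b')))
      (Or.inr (by simp)) (mem_sem_top I x)
    rw [mem_sem_ex] at hx1
    obtain ⟨y, -, hy⟩ := hx1
    rw [mem_sem_inf] at hy
    have hyb : y ∈ I.sem (Concept.atom b : Concept A R) := hsub hy.1
    have hbot := hI ((Concept.atom b).inf (Concept.atom b'), Concept.bot)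
      (Or.inr (by simp)) ((mem_sem_inf I _ _ y).2 ⟨hyb, hy.2⟩)
    exact not_mem_sem_bot I y hbot
  · intro h I hIT
    intro x hxa
    by_contra hxb
    apply h
    refine ⟨⟨I.Δ, I.nonempty, fun c => if c = b' then (I.conc b)ᶜ else I.conc c,
      fun s => if s = r then (fun _ y => y = x) else I.role s, I.ind⟩, ?_⟩
    set J : Interp A R Ind := ⟨I.Δ, I.nonempty, fun c => if c = b' then (I.conc b)ᶜ else I.conc c,
      fun s => if s = r then (fun _ y => y = x) else I.role s, I.ind⟩ with hJ
    have hsame : ∀ C : Concept A R, ¬ C.atomOcc b' → ¬ C.roleOcc r →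
        J.sem C = I.sem C := by
      intro C hC1 hC2
      show (Interp.mk I.Δ I.nonempty (fun c => if c = b' then (I.conc b)ᶜ else I.conc c)
          (fun s => if s = r then (fun _ y => y = x) else I.role s) I.ind).sem C
        = (Interp.mk I.Δ I.nonempty I.conc I.role I.ind).sem C
      apply sem_ext
      · intro y hy
        have : y ≠ b' := fun e => hC1 (e ▸ hy)
        simp [this]
      · intro s hs
        have : s ≠ r := fun e => hC2 (e ▸ hs)
        simp [this]
    intro ax hax
    rcases hax with hax | hax
    · -- axioms of T
      obtain ⟨⟨h1, h2⟩, ⟨h3, h4⟩, -⟩ := hfresh ax hax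
      intro z hz
      rw [hsame ax.2 h2 h4]
      exact hIT ax hax ((hsame ax.1 h1 h3) ▸ hz)
    · simp only [Set.mem_insert_iff, Set.mem_singleton_iff] at hax
      rcases hax with hax | hax | hax
      · subst hax
        intro z _
        refine (mem_sem_ex J r _ z).mpr ⟨x, ?_, (mem_sem_inf J _ _ x).mpr ⟨?_, ?_⟩⟩
        · show (if r = r then (fun _ y => y = x) else I.role r) z x
          rw [if_pos rfl]
        · show x ∈ (if a = b' then (I.conc b)ᶜ else I.conc a)
          rw [if_neg (Ne.symm hb'a)]; exact hxa
        · show x ∈ (if b' = b' then (I.conc b)ᶜ else I.conc b')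
          rw [if_pos rfl]; exact hxb
      · subst hax
        intro z _
        rw [mem_sem_sup]
        by_cases hzb : z ∈ I.conc b
        · left
          show z ∈ (if b = b' then (I.conc b)ᶜ else I.conc b)
          simp [Ne.symm hb'b, hzb]
        · right
          show z ∈ (if b' = b' then (I.conc b)ᶜ else I.conc b')
          simp [hzb]
      · subst hax
        intro z hz
        rw [mem_sem_inf] at hz
        obtain ⟨hz1, hz2⟩ := hz
        have hz1' : z ∈ I.conc b := by
          have : z ∈ (if b = b' then (I.conc b)ᶜ else I.conc b) := hz1
          simpa [Ne.symm hb'b] using this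
        have hz2' : z ∈ (I.conc b)ᶜ := by
          have : z ∈ (if b' = b' then (I.conc b)ᶜ else I.conc b') := hz2
          simpa using this
        exact absurd hz1' hz2'

end ALC
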